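/- arXiv:2404.17689 — 2 statements merged into one kernel-verified Lean document; each statement's English description precedes it below -/
import Mathlib

section
/- Let α ∈ (0,1) and ρ' ∈ (0, (λ/γ)(1−α)/α). Suppose (ũ^k, ṽ^k)_{k≥1} ⊂ ℝ^n × ℝ^m satisfies, for every k ≥ 1: ũ^{k+1} ∈ prox_{αγ‖·‖₀}((1−α)ũ^k + αDṽ^k) and F(ũ^{k+1}, ṽ^{k+1}) − F(ũ^{k+1}, ṽ^k) ≤ (ρ'/2)‖ũ^{k+1} − ũ^k‖₂². Then there exists a positive integer N such that supp(ũ^k) = supp(ũ^N) for all k ≥ N. -/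
open Matrix

noncomputable section

/-- Matrix–vector multiplication as a map between Euclidean spaces. -/
def mulVecE {n m : ℕ} (A : Matrix (Fin n) (Fin m) ℝ) (v : EuclideanSpace ℝ (Fin m)) :
    EuclideanSpace ℝ (Fin n) :=
  (EuclideanSpace.equiv (Fin n) ℝ).symm (A.mulVec ((EuclideanSpace.equiv (Fin m) ℝ) v))

/-- The `ℓ₀` "norm": the number of nonzero components, as a real number. -/
def l0 {n : ℕ} (u : EuclideanSpace ℝ (Fin n)) : ℝ := ({i : Fin n | u i ≠ 0}).ncard

/-- The support of a vector. -/
def supp {n : ℕ} (u : EuclideanSpace ℝ (Fin n)) : Set (Fin n) := {i | u i ≠ 0}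

/-- Membership `x ∈ prox_{t‖·‖₀}(y)`. -/
def InProxL0 {n : ℕ} (t : ℝ) (x y : EuclideanSpace ℝ (Fin n)) : Prop :=
  ∀ z : EuclideanSpace ℝ (Fin n),
    (1 / (2 * t)) * ‖x - y‖ ^ 2 + l0 x ≤ (1 / (2 * t)) * ‖z - y‖ ^ 2 + l0 z

/-- The objective `F(u,v) = ψ(Bv) + (λ/(2γ))‖u − Dv‖₂² + λ‖u‖₀`. -/
def Fobj {n m p : ℕ} (ψ : EuclideanSpace ℝ (Fin p) → ℝ) (B : Matrix (Fin p) (Fin m) ℝ)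
    (D : Matrix (Fin n) (Fin m) ℝ) (lam γ : ℝ) (u : EuclideanSpace ℝ (Fin n))
    (v : EuclideanSpace ℝ (Fin m)) : ℝ :=
  ψ (mulVecE B v) + (lam / (2 * γ)) * ‖u - mulVecE D v‖ ^ 2 + lam * l0 u

/- ### Auxiliary lemmas -/

def updE {n : ℕ} (x : EuclideanSpace ℝ (Fin n)) (i : Fin n) (c : ℝ) :
    EuclideanSpace ℝ (Fin n) :=
  (WithLp.equiv 2 (Fin n → ℝ)).symm (Function.update ((WithLp.equiv 2 (Fin n → ℝ)) x) i c)

lemma updE_apply {n : ℕ} (x : EuclideanSpace ℝ (Fin n)) (i : Fin n) (c : ℝ) (j : Fin n) :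
    updE x i c j = if j = i then c else x j := by
  simp [updE, Function.update]

lemma norm_sq_eq {n : ℕ} (x : EuclideanSpace ℝ (Fin n)) : ‖x‖^2 = ∑ i, (x i)^2 := by
  rw [EuclideanSpace.norm_eq, Real.sq_sqrt (by positivity)]
  simp [sq_abs]

lemma l0_nonneg {n : ℕ} (x : EuclideanSpace ℝ (Fin n)) : 0 ≤ l0 x := Nat.cast_nonneg _

lemma l0_mono {n : ℕ} {x z : EuclideanSpace ℝ (Fin n)}
    (h : ∀ j, z j ≠ 0 → x j ≠ 0) : l0 z ≤ l0 x := by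
  have : ({i : Fin n | z i ≠ 0}).ncard ≤ ({i : Fin n | x i ≠ 0}).ncard :=
    Set.ncard_le_ncard (fun j hj => h j hj) (Set.toFinite _)
  unfold l0; exact_mod_cast this

lemma coord_sq_le_norm_sq {n : ℕ} (x : EuclideanSpace ℝ (Fin n)) (i : Fin n) :
    (x i)^2 ≤ ‖x‖^2 := by
  rw [norm_sq_eq]
  exact Finset.single_le_sum (fun j _ => sq_nonneg (x j)) (Finset.mem_univ i)

lemma norm_sq_update {n : ℕ} (x y : EuclideanSpace ℝ (Fin n)) (i : Fin n) (c : ℝ) :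
    ‖updE x i c - y‖^2 = ‖x - y‖^2 - (x i - y i)^2 + (c - y i)^2 := by
  rw [norm_sq_eq, norm_sq_eq]
  have h1 : ∀ j, ((updE x i c - y) j)^2
      = Function.update (fun j => ((x - y) j)^2) i ((c - y i)^2) j := by
    intro j
    by_cases hj : j = i
    · subst hj; simp [PiLp.sub_apply, updE_apply]
    · simp [Function.update_of_ne hj, PiLp.sub_apply, updE_apply, hj]
  simp_rw [h1]
  rw [Finset.sum_update_of_mem (Finset.mem_univ i)]
  rw [← Finset.sum_erase_add Finset.univ (fun j => ((x - y) j)^2) (Finset.mem_univ i)]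
  simp [PiLp.sub_apply]
  ring

lemma prox_coord {n : ℕ} {t : ℝ} (ht : 0 < t) {x y : EuclideanSpace ℝ (Fin n)}
    (hp : InProxL0 t x y) {i : Fin n} (hi : x i ≠ 0) : 2 * t ≤ (x i)^2 := by
  have ht' : 0 < 1 / (2 * t) := by positivity
  have hxy : x i = y i := by
    by_contra hne
    have hnorm := norm_sq_update x y i (y i)
    have hl0 : l0 (updE x i (y i)) ≤ l0 x := by
      apply l0_mono
      intro j hj
      by_cases hji : j = i
      · subst hji; exact hi
      · rwa [updE_apply, if_neg hji] at hj
    have := hp (updE x i (y i))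
    rw [hnorm] at this
    nlinarith [sq_pos_of_ne_zero (sub_ne_zero.mpr hne)]
  have hnorm := norm_sq_update x y i 0
  have hl0 : l0 (updE x i 0) = l0 x - 1 := by
    have hset : {j : Fin n | updE x i 0 j ≠ 0} = {j : Fin n | x j ≠ 0} \ {i} := by
      ext j
      by_cases hji : j = i
      · subst hji; simp [updE_apply]
      · simp [updE_apply, hji]
    have hmem : i ∈ {j : Fin n | x j ≠ 0} := hi
    have hc := Set.ncard_diff_singleton_of_mem hmem
    have hpos : 1 ≤ ({j : Fin n | x j ≠ 0}).ncard :=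
      (Set.ncard_pos (Set.toFinite _)).mpr ⟨i, hmem⟩
    unfold l0
    rw [hset, hc]
    push_cast [Nat.cast_sub hpos]
    ring
  have := hp (updE x i 0)
  rw [hnorm, hl0, hxy] at this
  have h2t : (0:ℝ) < 2 * t := by linarith
  have hinv : 1 / (2*t) * (2*t) = 1 := by field_simp
  rw [hxy]
  nlinarith [this, hinv]

/-- **Proposition on fixed support.** Under the assumptions of the inexact
iteration there exists a positive integer `N` with `supp(ũ^k) = supp(ũ^N)` for all
`k ≥ N`. -/
theorem stmt12 (n m p : ℕ) (ψ : EuclideanSpace ℝ (Fin p) → ℝ)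
    (hconv : ConvexOn ℝ Set.univ ψ) (hdiff : ContDiff ℝ 1 ψ)
    (hbdd : BddBelow (Set.range ψ))
    (B : Matrix (Fin p) (Fin m) ℝ) (D : Matrix (Fin n) (Fin m) ℝ) (hD : Dᵀ * D = 1)
    (lam γ : ℝ) (hlam : 0 < lam) (hγ : 0 < γ)
    (α : ℝ) (hα0 : 0 < α) (hα1 : α < 1)
    (ρ' : ℝ) (hρ'0 : 0 < ρ') (hρ'1 : ρ' < (lam / γ) * ((1 - α) / α))
    (u : ℕ → EuclideanSpace ℝ (Fin n)) (v : ℕ → EuclideanSpace ℝ (Fin m))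
    (hprox : ∀ k, 1 ≤ k →
      InProxL0 (α * γ) (u (k + 1)) ((1 - α) • u k + α • mulVecE D (v k)))
    (hineq : ∀ k, 1 ≤ k →
      Fobj ψ B D lam γ (u (k + 1)) (v (k + 1)) - Fobj ψ B D lam γ (u (k + 1)) (v k) ≤
        (ρ' / 2) * ‖u (k + 1) - u k‖ ^ 2) :
    ∃ N : ℕ, 0 < N ∧ ∀ k, N ≤ k → supp (u k) = supp (u N) := by
  obtain ⟨M, hM⟩ := hbdd
  have hMle : ∀ x, M ≤ ψ x := fun x => hM ⟨x, rfl⟩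
  set Fv : ℕ → ℝ := fun k => Fobj ψ B D lam γ (u k) (v k) with hFv
  have hFlb : ∀ k, M ≤ Fv k := by
    intro k
    have h1 : 0 ≤ (lam / (2 * γ)) * ‖u k - mulVecE D (v k)‖ ^ 2 := by positivity
    have h2 : 0 ≤ lam * l0 (u k) := mul_nonneg hlam.le (l0_nonneg _)
    have h3 := hMle (mulVecE B (v k))
    simp only [hFv, Fobj]
    linarith
  set c : ℝ := ((lam / γ) * ((1 - α) / α) - ρ') / 2 with hcdef
  have hc : 0 < c := by simp only [hcdef]; linarith
  -- The descent inequality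
  have hdesc : ∀ k, 1 ≤ k → Fv (k+1) + c * ‖u (k+1) - u k‖^2 ≤ Fv k := by
    intro k hk
    have hγ' : (γ:ℝ) ≠ 0 := ne_of_gt hγ
    have hα' : (α:ℝ) ≠ 0 := ne_of_gt hα0
    set a := u (k+1) with hadef
    set b := u k with hbdef
    set w := mulVecE D (v k) with hwdef
    set d2 := ‖a - b‖^2 with hd2
    set S : ℝ := inner ℝ (a - b) (b - w) with hSdef
    have hby : b - ((1-α) • b + α • w) = α • (b - w) := by module
    have hay : a - ((1-α) • b + α • w) = (a - b) + α • (b - w) := by module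
    have hp := hprox k hk b
    rw [← hadef, ← hbdef, ← hwdef] at hp
    rw [hay, hby] at hp
    have esm : ‖α • (b - w)‖^2 = α^2 * ‖b - w‖^2 := by
      rw [norm_smul]; simp [Real.norm_eq_abs, mul_pow, sq_abs]
    have e1 : ‖(a - b) + α • (b - w)‖^2 = d2 + 2*α*S + α^2 * ‖b - w‖^2 := by
      rw [norm_add_sq_real, real_inner_smul_right, esm, ← hSdef, ← hd2]; ring
    rw [e1, esm] at hp
    have htpos : 0 < α * γ := mul_pos hα0 hγ
    have key : d2 + 2*α*S ≤ 2*(α*γ)*(l0 b - l0 a) := by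
      have hinv : 1/(2*(α*γ)) * (2*(α*γ)) = 1 := by field_simp
      nlinarith [hp, htpos]
    have e3 : ‖a - w‖^2 = d2 + 2*S + ‖b - w‖^2 := by
      have h : a - w = (a - b) + (b - w) := by module
      rw [h, norm_add_sq_real, ← hSdef, ← hd2]
    have hin := hineq k hk
    rw [← hadef, ← hbdef] at hin
    have hFa : Fobj ψ B D lam γ a (v k)
        = ψ (mulVecE B (v k)) + (lam/(2*γ)) * (d2 + 2*S + ‖b - w‖^2) + lam * l0 a := by
      have h0 : Fobj ψ B D lam γ a (v k)
          = ψ (mulVecE B (v k)) + (lam/(2*γ)) * ‖a - w‖^2 + lam * l0 a := rfl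
      rw [h0, e3]
    have hFb : Fv k = ψ (mulVecE B (v k)) + (lam/(2*γ)) * ‖b - w‖^2 + lam * l0 b := rfl
    have hgoal2 : Fobj ψ B D lam γ a (v k) + (ρ'/2) * d2 + c * d2 ≤ Fv k := by
      rw [hFa, hFb]
      have hkey2 : (lam/(2*α*γ)) * (d2 + 2*α*S) ≤ (lam/(2*α*γ)) * (2*(α*γ)*(l0 b - l0 a)) :=
        mul_le_mul_of_nonneg_left key (by positivity)
      have id1 : (lam/(2*α*γ)) * (2*(α*γ)*(l0 b - l0 a)) = lam * (l0 b - l0 a) := by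
        field_simp
      have id2 : (lam/(2*α*γ)) * (d2 + 2*α*S) = (lam/(2*α*γ)) * d2 + (lam/γ) * S := by
        field_simp
      have id3 : (lam/(2*γ)) * (d2 + 2*S + ‖b - w‖^2)
          = (lam/(2*γ)) * d2 + (lam/γ) * S + (lam/(2*γ)) * ‖b - w‖^2 := by
        field_simp
      have id4 : (lam/(2*α*γ)) = (lam/(2*γ)) + (lam/γ) * ((1-α)/α) / 2 := by
        field_simp; ring
      have id5 : ρ'/2 + c = (lam/γ) * ((1-α)/α) / 2 := by
        rw [hcdef]; ring
      rw [id1, id2] at hkey2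
      rw [id3]
      have id6 : (ρ'/2 + c) * d2 = (lam/γ * ((1-α)/α)/2) * d2 := by rw [id5]
      have id7 : (lam/(2*α*γ)) * d2 = ((lam/(2*γ)) + lam/γ * ((1-α)/α)/2) * d2 := by
        rw [← id4]
      linarith [hkey2, id6, id7]
    have : Fv (k+1) ≤ Fobj ψ B D lam γ a (v k) + (ρ'/2) * d2 := by
      have : Fv (k+1) = Fobj ψ B D lam γ a (v (k+1)) := rfl
      rw [this]; rw [← hd2] at hin; linarith
    linarith
  -- Summability of the squared step sizes
  have htel : ∀ K, Fv (K+1) + c * ∑ j ∈ Finset.range K, ‖u (j+2) - u (j+1)‖^2 ≤ Fv 1 := by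
    intro K
    induction K with
    | zero => simp
    | succ K ih =>
      have h := hdesc (K+1) (by omega)
      rw [Finset.sum_range_succ, mul_add]
      have : K + 1 + 1 = K + 2 := rfl
      linarith
  have hsummable : Summable (fun j => ‖u (j+2) - u (j+1)‖^2) := by
    apply summable_of_sum_range_le (c := (Fv 1 - M)/c) (fun j => sq_nonneg _)
    intro K
    rw [le_div_iff₀ hc]
    have := htel K
    have := hFlb (K+1)
    linarith
  have hto := hsummable.tendsto_atTop_zero
  have hev : ∀ᶠ j in Filter.atTop, ‖u (j+2) - u (j+1)‖^2 < 2*(α*γ) :=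
    hto.eventually (gt_mem_nhds (by positivity))
  obtain ⟨K0, hK0⟩ := Filter.eventually_atTop.mp hev
  refine ⟨K0 + 2, by omega, ?_⟩
  have htpos : 0 < α * γ := mul_pos hα0 hγ
  have hstep : ∀ k, K0 + 2 ≤ k → supp (u (k+1)) = supp (u k) := by
    intro k hk
    have hsmall : ‖u (k+1) - u k‖^2 < 2*(α*γ) := by
      obtain ⟨j, rfl⟩ : ∃ j, k = j + 2 := ⟨k - 2, by omega⟩
      exact hK0 (j+1) (by omega)
    have hpk1 := hprox k (by omega)
    have hpk : InProxL0 (α*γ) (u k)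
        ((1 - α) • u (k-1) + α • mulVecE D (v (k-1))) := by
      have h := hprox (k-1) (by omega)
      have hkk : k - 1 + 1 = k := by omega
      rwa [hkk] at h
    ext i
    simp only [supp, Set.mem_setOf_eq]
    constructor
    · intro h1
      by_contra h0
      have hb := prox_coord htpos hpk1 h1
      have heq : ((u (k+1) - u k) i)^2 = (u (k+1) i)^2 := by
        simp [PiLp.sub_apply, h0]
      have hle := coord_sq_le_norm_sq (u (k+1) - u k) i
      rw [heq] at hle
      linarith
    · intro h1
      by_contra h0
      have hb := prox_coord htpos hpk h1
      have heq : ((u (k+1) - u k) i)^2 = (u k i)^2 := by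
        simp [PiLp.sub_apply, h0]
      have hle := coord_sq_le_norm_sq (u (k+1) - u k) i
      rw [heq] at hle
      linarith
  intro k hk
  refine Nat.le_induction rfl (fun k hk ih => ?_) k hk
  rw [hstep k hk, ih]

end
end

section
/- Let α ∈ (0,1] and C ⊆ {1,…,n}, and define G(u,v) := ψ(Bv) + (λ/(2γ))‖u − Dv‖₂² + δ_C(u), where δ_C(u) = 0 if supp(u) ⊆ C and δ_C(u) = ∞ otherwise. Then (u*, v*) ∈ ℝ^n × ℝ^m is a global minimizer of G if and only if u* is a fixed point of 𝒯, i.e., u* = (1−α)T_C u* + α T_C D S(Dᵀu*), and v* = S(Dᵀu*). -/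
open Matrix

noncomputable section

/-- The coordinate projection `T_C` onto an index set `C`. -/
def Tmat {n : ℕ} (C : Set (Fin n)) (u : EuclideanSpace ℝ (Fin n)) :
    EuclideanSpace ℝ (Fin n) :=
  (EuclideanSpace.equiv (Fin n) ℝ).symm (C.indicator (fun i => u i))

open RealInnerProductSpace

lemma Tmat_apply {n : ℕ} (C : Set (Fin n)) (u : EuclideanSpace ℝ (Fin n)) (i : Fin n) :
    Tmat C u i = C.indicator (fun j => u j) i := rfl

lemma inner_mulVecE {n m : ℕ} (D : Matrix (Fin n) (Fin m) ℝ) (v : EuclideanSpace ℝ (Fin m))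
    (u : EuclideanSpace ℝ (Fin n)) : ⟪mulVecE D v, u⟫ = ⟪v, mulVecE Dᵀ u⟫ := by
  simp only [PiLp.inner_apply, RCLike.inner_apply, conj_trivial]
  show ∑ i, u i * D.mulVec v i = ∑ j, Dᵀ.mulVec u j * v j
  simp only [Matrix.mulVec, dotProduct, transpose_apply, Finset.sum_mul, Finset.mul_sum]
  rw [Finset.sum_comm]
  congr 1; ext j; congr 1; ext i; ring

lemma mulVecE_mulVecE {n m : ℕ} (D : Matrix (Fin n) (Fin m) ℝ) (hD : Dᵀ * D = 1)
    (v : EuclideanSpace ℝ (Fin m)) : mulVecE Dᵀ (mulVecE D v) = v := by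
  ext i
  show Dᵀ.mulVec (D.mulVec v) i = v i
  rw [Matrix.mulVec_mulVec, hD, Matrix.one_mulVec]

lemma inner_mulVecE_mulVecE {n m : ℕ} (D : Matrix (Fin n) (Fin m) ℝ) (hD : Dᵀ * D = 1)
    (a b : EuclideanSpace ℝ (Fin m)) : ⟪mulVecE D a, mulVecE D b⟫ = ⟪a, b⟫ := by
  rw [inner_mulVecE, mulVecE_mulVecE D hD]

lemma norm_sq_eqE {n : ℕ} (y : EuclideanSpace ℝ (Fin n)) : ‖y‖^2 = ∑ i, (y i)^2 := by
  rw [← real_inner_self_eq_norm_sq]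
  simp only [PiLp.inner_apply, RCLike.inner_apply, conj_trivial, sq]

lemma quad_id {E : Type*} [NormedAddCommGroup E] [InnerProductSpace ℝ E] (a b x : E) (t : ℝ) :
    ‖(1-t)•a + t•b - x‖^2 = (1-t)*‖a-x‖^2 + t*‖b-x‖^2 - t*(1-t)*‖a-b‖^2 := by
  have h1 : (1-t)•a + t•b - x = (a - x) + t•(b - a) := by
    rw [smul_sub]; module
  have h2 : b - x = (a - x) + (b - a) := by abel
  have h3 : a - b = -(b - a) := by abel
  rw [h1, h2, h3, norm_neg, norm_add_sq_real, norm_add_sq_real, inner_smul_right, norm_smul]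
  simp [mul_pow, sq_abs]
  ring

lemma mulVecE_comb {n m : ℕ} (A : Matrix (Fin n) (Fin m) ℝ) (a b : EuclideanSpace ℝ (Fin m))
    (s t : ℝ) : mulVecE A (s•a + t•b) = s • mulVecE A a + t • mulVecE A b := by
  ext i
  show (∑ j, A i j * (s * a j + t * b j)) = s * (∑ j, A i j * a j) + t * (∑ j, A i j * b j)
  simp [mul_add, Finset.sum_add_distrib, Finset.mul_sum, mul_left_comm]

lemma growth {m p : ℕ} (ψ : EuclideanSpace ℝ (Fin p) → ℝ)
    (hconv : ConvexOn ℝ Set.univ ψ) (B : Matrix (Fin p) (Fin m) ℝ)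
    (c : ℝ) (hc : 0 < c) (x sx : EuclideanSpace ℝ (Fin m))
    (hsx : ∀ v, ψ (mulVecE B sx) + c*‖sx - x‖^2 ≤ ψ (mulVecE B v) + c*‖v - x‖^2)
    (w : EuclideanSpace ℝ (Fin m)) :
    ψ (mulVecE B sx) + c*‖sx - x‖^2 + c*‖w - sx‖^2 ≤ ψ (mulVecE B w) + c*‖w - x‖^2 := by
  have key : ∀ t : ℝ, 0 < t → t < 1 →
      ψ (mulVecE B sx) + c*‖sx - x‖^2 + c*(1-t)*‖w - sx‖^2 ≤
        ψ (mulVecE B w) + c*‖w - x‖^2 := by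
    intro t ht0 ht1
    have h0 := hsx ((1-t)•sx + t•w)
    rw [mulVecE_comb, quad_id] at h0
    have hcv := hconv.2 (Set.mem_univ (mulVecE B sx)) (Set.mem_univ (mulVecE B w))
      (by linarith : (0:ℝ) ≤ 1 - t) (le_of_lt ht0) (by ring)
    simp only [smul_eq_mul] at hcv
    rw [norm_sub_rev sx w] at h0
    have hmul : t * (ψ (mulVecE B sx) + c*‖sx - x‖^2 + c*(1-t)*‖w - sx‖^2) ≤
        t * (ψ (mulVecE B w) + c*‖w - x‖^2) := by nlinarith [h0, hcv]
    exact le_of_mul_le_mul_left hmul ht0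
  rcases eq_or_lt_of_le (norm_nonneg (w - sx)) with hz | hz
  · have := key (1/2) (by norm_num) (by norm_num)
    calc ψ (mulVecE B sx) + c*‖sx - x‖^2 + c*‖w - sx‖^2
        = ψ (mulVecE B sx) + c*‖sx - x‖^2 + c*(1-(1/2):ℝ)*‖w - sx‖^2 := by
          rw [← hz]; ring
      _ ≤ _ := this
  · apply le_of_forall_pos_le_add
    intro ε hε
    have hN : 0 < ‖w - sx‖^2 := by positivity
    set t := min (1/2 : ℝ) (ε / (c * ‖w - sx‖^2)) with htdef
    have ht0 : 0 < t := lt_min (by norm_num) (by positivity)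
    have ht1 : t < 1 := lt_of_le_of_lt (min_le_left _ _) (by norm_num)
    have hk := key t ht0 ht1
    have hbound : c * t * ‖w - sx‖^2 ≤ ε := by
      have h1 : t ≤ ε / (c * ‖w - sx‖^2) := min_le_right _ _
      have h2 : 0 < c * ‖w - sx‖^2 := by positivity
      calc c * t * ‖w - sx‖^2 = t * (c * ‖w - sx‖^2) := by ring
        _ ≤ (ε / (c * ‖w - sx‖^2)) * (c * ‖w - sx‖^2) :=
            mul_le_mul_of_nonneg_right h1 (le_of_lt h2)
        _ = ε := div_mul_cancel₀ _ (ne_of_gt h2)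
    nlinarith [hk, hbound]

lemma key_ineq {n m : ℕ} (D : Matrix (Fin n) (Fin m) ℝ) (hD : Dᵀ * D = 1)
    (C : Set (Fin n)) (us u : EuclideanSpace ℝ (Fin n)) (vs v : EuclideanSpace ℝ (Fin m))
    (hus : us = Tmat C (mulVecE D vs)) (hu : supp u ⊆ C) :
    ‖us - mulVecE D vs‖^2 + ‖v - mulVecE Dᵀ us‖^2 ≤
      ‖u - mulVecE D v‖^2 + ‖v - vs‖^2 + ‖vs - mulVecE Dᵀ us‖^2 := by
  set Dv := mulVecE D v with hDv
  set Dvs := mulVecE D vs with hDvs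
  set x := mulVecE Dᵀ us with hx
  have huoff : ∀ i, i ∉ C → u i = 0 := by
    intro i hiC; by_contra h; exact hiC (hu h)
  have husC : ∀ i, i ∈ C → us i = Dvs i := by
    intro i hiC; rw [hus, Tmat_apply, Set.indicator_of_mem hiC]
  have husoff : ∀ i, i ∉ C → us i = 0 := by
    intro i hiC; rw [hus, Tmat_apply, Set.indicator_of_notMem hiC]
  have f1 : ⟪Dvs, us⟫ = ⟪vs, x⟫ := inner_mulVecE D vs us
  have f2 : ⟪Dv, us⟫ = ⟪v, x⟫ := inner_mulVecE D v us
  have f3 : ⟪Dv, Dvs⟫ = ⟪v, vs⟫ := inner_mulVecE_mulVecE D hD v vs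
  have f3a : ‖Dv‖^2 = ‖v‖^2 := by
    rw [← real_inner_self_eq_norm_sq, ← real_inner_self_eq_norm_sq,
      inner_mulVecE_mulVecE D hD]
  have f3b : ‖Dvs‖^2 = ‖vs‖^2 := by
    rw [← real_inner_self_eq_norm_sq, ← real_inner_self_eq_norm_sq,
      inner_mulVecE_mulVecE D hD]
  have f4 : ⟪Dvs, us⟫ = ‖us‖^2 := by
    rw [← real_inner_self_eq_norm_sq]
    simp only [PiLp.inner_apply, RCLike.inner_apply, conj_trivial]
    apply Finset.sum_congr rfl
    intro i _
    by_cases hiC : i ∈ C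
    · rw [husC i hiC]
    · rw [husoff i hiC]; ring
  have f5 : ⟪Dvs, u⟫ = ⟪us, u⟫ := by
    simp only [PiLp.inner_apply, RCLike.inner_apply, conj_trivial]
    apply Finset.sum_congr rfl
    intro i _
    by_cases hiC : i ∈ C
    · rw [husC i hiC]
    · rw [huoff i hiC]; ring
  have hnn : (0:ℝ) ≤ ‖(Dv - Dvs) - (u - us)‖^2 := sq_nonneg _
  have e0 : ‖(Dv - Dvs) - (u - us)‖^2
      = ‖Dv - Dvs‖^2 - 2*⟪Dv - Dvs, u - us⟫ + ‖u - us‖^2 := norm_sub_sq_real _ _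
  have e1 : ⟪Dv - Dvs, u - us⟫
      = ⟪Dv, u⟫ - ⟪Dv, us⟫ - ⟪Dvs, u⟫ + ⟪Dvs, us⟫ := by
    simp [inner_sub_left, inner_sub_right]; ring
  have e2 : ‖Dv - Dvs‖^2 = ‖Dv‖^2 - 2*⟪Dv, Dvs⟫ + ‖Dvs‖^2 := norm_sub_sq_real _ _
  have e3 : ‖u - us‖^2 = ‖u‖^2 - 2*⟪u, us⟫ + ‖us‖^2 := norm_sub_sq_real _ _
  have e4 : ‖us - Dvs‖^2 = ‖us‖^2 - 2*⟪us, Dvs⟫ + ‖Dvs‖^2 := norm_sub_sq_real _ _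
  have e5 : ‖v - x‖^2 = ‖v‖^2 - 2*⟪v, x⟫ + ‖x‖^2 := norm_sub_sq_real _ _
  have e6 : ‖u - Dv‖^2 = ‖u‖^2 - 2*⟪u, Dv⟫ + ‖Dv‖^2 := norm_sub_sq_real _ _
  have e7 : ‖v - vs‖^2 = ‖v‖^2 - 2*⟪v, vs⟫ + ‖vs‖^2 := norm_sub_sq_real _ _
  have e8 : ‖vs - x‖^2 = ‖vs‖^2 - 2*⟪vs, x⟫ + ‖x‖^2 := norm_sub_sq_real _ _
  have c1 : ⟪us, Dvs⟫ = ⟪Dvs, us⟫ := real_inner_comm _ _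
  have c2 : ⟪u, Dv⟫ = ⟪Dv, u⟫ := real_inner_comm _ _
  have c3 : ⟪u, us⟫ = ⟪us, u⟫ := real_inner_comm _ _
  have c4 : ⟪v, vs⟫ = ⟪Dv, Dvs⟫ := f3.symm
  linarith [hnn, e0, e1, e2, e3, e4, e5, e6, e7, e8, c1, c2, c3, c4, f1, f2, f4, f5, f3a, f3b]

lemma Tmat_supp {n : ℕ} (C : Set (Fin n)) (y : EuclideanSpace ℝ (Fin n)) :
    supp (Tmat C y) ⊆ C := by
  intro i hi
  by_contra h
  exact hi (by rw [Tmat_apply, Set.indicator_of_notMem h])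

theorem stmt15 (n m p : ℕ) (ψ : EuclideanSpace ℝ (Fin p) → ℝ)
    (hconv : ConvexOn ℝ Set.univ ψ) (hdiff : ContDiff ℝ 1 ψ)
    (hbdd : BddBelow (Set.range ψ))
    (B : Matrix (Fin p) (Fin m) ℝ) (D : Matrix (Fin n) (Fin m) ℝ) (hD : Dᵀ * D = 1)
    (lam γ : ℝ) (hlam : 0 < lam) (hγ : 0 < γ)
    (S : EuclideanSpace ℝ (Fin m) → EuclideanSpace ℝ (Fin m))
    (hS : ∀ x v, ψ (mulVecE B (S x)) + (lam / (2 * γ)) * ‖S x - x‖ ^ 2 ≤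
      ψ (mulVecE B v) + (lam / (2 * γ)) * ‖v - x‖ ^ 2)
    (hSuniq : ∀ x v, (∀ w, ψ (mulVecE B v) + (lam / (2 * γ)) * ‖v - x‖ ^ 2 ≤
      ψ (mulVecE B w) + (lam / (2 * γ)) * ‖w - x‖ ^ 2) → v = S x)
    (α : ℝ) (hα0 : 0 < α) (hα1 : α ≤ 1)
    (C : Set (Fin n)) (us : EuclideanSpace ℝ (Fin n)) (vs : EuclideanSpace ℝ (Fin m)) :
    (supp us ⊆ C ∧ ∀ u v, supp u ⊆ C →
        ψ (mulVecE B vs) + (lam / (2 * γ)) * ‖us - mulVecE D vs‖ ^ 2 ≤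
          ψ (mulVecE B v) + (lam / (2 * γ)) * ‖u - mulVecE D v‖ ^ 2) ↔
      (us = (1 - α) • Tmat C us + α • Tmat C (mulVecE D (S (mulVecE Dᵀ us))) ∧
        vs = S (mulVecE Dᵀ us)) := by
  set c : ℝ := lam / (2 * γ) with hcdef
  have hc : 0 < c := by positivity
  set x : EuclideanSpace ℝ (Fin m) := mulVecE Dᵀ us with hx
  -- the key norm identity
  have hid : ∀ v : EuclideanSpace ℝ (Fin m),
      ‖us - mulVecE D v‖^2 = ‖v - x‖^2 + ‖us‖^2 - ‖x‖^2 := by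
    intro v
    have h1 : ⟪mulVecE D v, us⟫ = ⟪v, x⟫ := inner_mulVecE D v us
    have h2 : ‖mulVecE D v‖^2 = ‖v‖^2 := by
      rw [← real_inner_self_eq_norm_sq, ← real_inner_self_eq_norm_sq,
        inner_mulVecE_mulVecE D hD]
    have e1 : ‖us - mulVecE D v‖^2 = ‖us‖^2 - 2*⟪us, mulVecE D v⟫ + ‖mulVecE D v‖^2 :=
      norm_sub_sq_real _ _
    have e2 : ‖v - x‖^2 = ‖v‖^2 - 2*⟪v, x⟫ + ‖x‖^2 := norm_sub_sq_real _ _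
    have c1 : ⟪us, mulVecE D v⟫ = ⟪mulVecE D v, us⟫ := real_inner_comm _ _
    linarith [e1, e2, c1, h1, h2]
  constructor
  · rintro ⟨hsupp, hmin⟩
    have husoff : ∀ i, i ∉ C → us i = 0 := by
      intro i hiC; by_contra h; exact hiC (hsupp h)
    have hveq : vs = S x := by
      apply hSuniq x vs
      intro w
      have h1 := hmin us w hsupp
      rw [hid vs, hid w] at h1
      linarith
    have husd : us = Tmat C (mulVecE D vs) := by
      set d := mulVecE D vs with hd
      have h1 := hmin (Tmat C d) vs (Tmat_supp C d)
      have h2 : ‖us - d‖^2 ≤ ‖Tmat C d - d‖^2 := by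
        have := (mul_le_mul_iff_right₀ hc).mp (by linarith : c * ‖us - d‖^2 ≤ c * ‖Tmat C d - d‖^2)
        exact this
      rw [norm_sq_eqE, norm_sq_eqE] at h2
      have hpt : ∀ i ∈ Finset.univ, ((Tmat C d - d) i)^2 ≤ ((us - d) i)^2 := by
        intro i _
        by_cases hiC : i ∈ C
        · have : (Tmat C d - d) i = 0 := by
            show Tmat C d i - d i = 0
            rw [Tmat_apply, Set.indicator_of_mem hiC]; ring
          rw [this]; simpa using sq_nonneg ((us - d) i)
        · have h3 : (Tmat C d - d) i = - d i := by
            show Tmat C d i - d i = - d i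
            rw [Tmat_apply, Set.indicator_of_notMem hiC]; ring
          have h4 : (us - d) i = - d i := by
            show us i - d i = - d i
            rw [husoff i hiC]; ring
          rw [h3, h4]
      have hsum := Finset.sum_le_sum hpt
      have heq := (Finset.sum_eq_sum_iff_of_le hpt).mp (le_antisymm hsum (by linarith))
      ext i
      have hi := heq i (Finset.mem_univ i)
      by_cases hiC : i ∈ C
      · have : (Tmat C d - d) i = 0 := by
          show Tmat C d i - d i = 0
          rw [Tmat_apply, Set.indicator_of_mem hiC]; ring
        rw [this] at hi
        have : (us - d) i = 0 := by
          have := hi.symm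
          nlinarith [this]
        have h5 : us i = d i := by
          have h6 : us i - d i = 0 := this
          linarith
        rw [h5, Tmat_apply, Set.indicator_of_mem hiC]
      · rw [husoff i hiC, Tmat_apply, Set.indicator_of_notMem hiC]
    have hTus : Tmat C us = us := by
      ext i
      by_cases hiC : i ∈ C
      · rw [Tmat_apply, Set.indicator_of_mem hiC]
      · rw [Tmat_apply, Set.indicator_of_notMem hiC, husoff i hiC]
    refine ⟨?_, hveq⟩
    rw [← hveq, hTus, ← husd]
    module
  · rintro ⟨hfix, hveq⟩
    have hsupp : supp us ⊆ C := by
      intro i hi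
      by_contra hiC
      apply hi
      have h1 : us i = (1-α) * Tmat C us i + α * Tmat C (mulVecE D (S x)) i := by
        conv_lhs => rw [hfix]
        rfl
      rw [h1, Tmat_apply, Tmat_apply, Set.indicator_of_notMem hiC,
        Set.indicator_of_notMem hiC]
      ring
    have husoff : ∀ i, i ∉ C → us i = 0 := by
      intro i hiC; by_contra h; exact hiC (hsupp h)
    have hTus : Tmat C us = us := by
      ext i
      by_cases hiC : i ∈ C
      · rw [Tmat_apply, Set.indicator_of_mem hiC]
      · rw [Tmat_apply, Set.indicator_of_notMem hiC, husoff i hiC]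
    have husd : us = Tmat C (mulVecE D vs) := by
      rw [hveq]
      ext i
      have h1 : us i = (1-α) * Tmat C us i + α * Tmat C (mulVecE D (S x)) i := by
        conv_lhs => rw [hfix]
        rfl
      have h2 : Tmat C us i = us i := by rw [hTus]
      rw [h2] at h1
      have h3 : α * us i = α * Tmat C (mulVecE D (S x)) i := by linarith
      exact mul_left_cancel₀ (ne_of_gt hα0) h3
    refine ⟨hsupp, ?_⟩
    intro u v hu
    have hg := growth ψ hconv B c hc x (S x) (fun w => hS x w) v
    rw [← hveq] at hg
    have hki := key_ineq D hD C us u vs v husd hu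
    have hki' := mul_le_mul_of_nonneg_left hki (le_of_lt hc)
    linarith [hg, hki']

end
end
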